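/- Let ω : (ℝᵐ)ⁿ → ℝ be an alternating n-linear map with n ≥ 2, and let M₀, R : ℝⁿ → ℝᵐ be linear maps with R of rank at most one. Then the function β : ℝ → ℝ defined by β(λ) = ω((M₀ + λR)e₁, …, (M₀ + λR)eₙ) is affine, i.e. there exist real numbers a, b such that β(λ) = a + b·λ for every λ ∈ ℝ. -/

import Mathlib

noncomputable section
open MeasureTheory Real Set Filter

/-- `ℝⁿ` with the Euclidean norm. -/
abbrev Euc (n : ℕ) : Type := EuclideanSpace ℝ (Fin n)

/-- The `i`-th standard basis vector of `ℝⁿ`. -/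
def stdVec (n : ℕ) (i : Fin n) : Euc n := EuclideanSpace.single i 1

/-- A linear map has rank at most one: its image lies in the span of a single vector. -/
def RankAtMostOne {n m : ℕ} (R : Euc n →L[ℝ] Euc m) : Prop :=
  ∃ u : Euc m, ∀ x : Euc n, ∃ c : ℝ, R x = c • u

/-- Evaluating an alternating form along a rank-one perturbation line is affine. -/
theorem alternating_eval_rank_one_perturbation_affine
    (m n : ℕ) (hn : 2 ≤ n)
    (ω : AlternatingMap ℝ (Euc m) ℝ (Fin n))
    (M₀ R : Euc n →L[ℝ] Euc m) (hR : RankAtMostOne R) :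
    ∃ a b : ℝ, ∀ lam : ℝ,
      ω (fun i => (M₀ + lam • R) (stdVec n i)) = a + b * lam := by
  obtain ⟨u, hu⟩ := hR
  set f : Fin n → Euc m := fun i => M₀ (stdVec n i) with hf
  choose c hc using fun i => hu (stdVec n i)
  refine ⟨ω f, ∑ i, c i * ω (Function.update f i u), fun lam => ?_⟩
  set h : Fin n → Euc m := fun i => (lam * c i) • u with hh
  have key : (fun i => (M₀ + lam • R) (stdVec n i)) = fun i => f i + h i := by
    funext i
    simp [hf, hh, hc i, smul_smul]
  rw [key]
  have expand : ω (fun i => f i + h i) =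
      ∑ s : Finset (Fin n), ω (s.piecewise h f) := by
    have := ω.toMultilinearMap.map_add_univ h f
    rw [show (fun i => f i + h i) = h + f from funext fun i => add_comm _ _]
    simpa using this
  rw [expand]
  -- terms with card ≥ 2 vanish
  have hzero : ∀ s : Finset (Fin n), 2 ≤ s.card → ω (s.piecewise h f) = 0 := by
    intro s hs
    obtain ⟨i, hi, j, hj, hij⟩ := Finset.one_lt_card.mp hs
    set v := s.piecewise h f with hv
    have hvi : v i = (lam * c i) • u := by simp [hv, Finset.piecewise_eq_of_mem _ _ _ hi, hh]
    have hvj : v j = (lam * c j) • u := by simp [hv, Finset.piecewise_eq_of_mem _ _ _ hj, hh]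
    have e1 : v = Function.update v i ((lam * c i) • u) := by
      rw [← hvi, Function.update_eq_self]
    rw [e1, ω.map_update_smul]
    set w := Function.update v i u with hw
    have hwj : w j = (lam * c j) • u := by
      rw [hw, Function.update_of_ne hij.symm, hvj]
    have e2 : w = Function.update w j ((lam * c j) • u) := by
      rw [← hwj, Function.update_eq_self]
    rw [e2, ω.map_update_smul]
    have : ω (Function.update w j u) = 0 := by
      apply ω.map_eq_zero_of_eq _ _ hij
      rw [Function.update_of_ne hij, hw, Function.update_self, Function.update_self]
    rw [this]
    simp
  have hfilter : ∑ s : Finset (Fin n), ω (s.piecewise h f) =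
      ∑ s ∈ Finset.univ.filter (fun s : Finset (Fin n) => s.card ≤ 1), ω (s.piecewise h f) := by
    refine (Finset.sum_filter_of_ne ?_).symm
    intro s _ hne
    by_contra hcard
    exact hne (hzero s (by omega))
  rw [hfilter]
  have hset : Finset.univ.filter (fun s : Finset (Fin n) => s.card ≤ 1) =
      insert (∅ : Finset (Fin n)) (Finset.univ.image fun i : Fin n => {i}) := by
    ext s
    simp only [Finset.mem_filter, Finset.mem_univ, true_and, Finset.mem_insert,
      Finset.mem_image]
    constructor
    · intro hs
      interval_cases hcard : s.card
      · left; exact Finset.card_eq_zero.mp hcard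
      · right
        obtain ⟨i, hi⟩ := Finset.card_eq_one.mp hcard
        exact ⟨i, hi.symm⟩
    · rintro (rfl | ⟨i, rfl⟩) <;> simp
  rw [hset, Finset.sum_insert (by simp), Finset.sum_image (fun i _ j _ hij => Finset.singleton_injective hij)]
  simp only [Finset.piecewise_empty, Finset.piecewise_singleton]
  have hsingle : ∀ i : Fin n, ω (Function.update f i (h i)) =
      (lam * c i) * ω (Function.update f i u) := by
    intro i
    rw [hh]
    rw [ω.map_update_smul]
    simp
  simp only [hsingle]
  rw [Finset.sum_mul]
  ring_nf
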